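/- Let S ⊂ ℝ be a compact interval, n₀ ∈ C⁰(ℝ) non-negative with supp(n₀) = S and n₀ > 0 in the interior of S, and let d > 0 be constant. Let p₁, p₂ be continuously differentiable, strictly monotone functions on S with p₁′ p₂′ > 0. If the corresponding total population sizes satisfy ρ₁(t) = ρ₂(t) for all t ∈ [0,T], then p₁(x) = p₂(x) for all x ∈ S. -/

import Mathlib

open MeasureTheory Set Filter Topology

namespace Stmt6Aux

lemma contOn_integrand {a b : ℝ} {n₀ p : ℝ → ℝ} (hn₀c : Continuous n₀)
    (hp : ContinuousOn p (Icc a b)) (k : ℕ) (t : ℝ) :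
    ContinuousOn (fun x => n₀ x * p x ^ k * Real.exp (t * p x)) (Icc a b) :=
  (hn₀c.continuousOn.mul (hp.pow k)).mul
    (Real.continuous_exp.comp_continuousOn (continuousOn_const.mul hp))

lemma hasDerivAt_mom {a b : ℝ} {n₀ p : ℝ → ℝ} (hn₀c : Continuous n₀)
    (hp : ContinuousOn p (Icc a b)) {M : ℝ} (hM : ∀ x ∈ Icc a b, |p x| ≤ M)
    (k : ℕ) (t₀ : ℝ) :
    HasDerivAt (fun t => ∫ x in Icc a b, n₀ x * p x ^ k * Real.exp (t * p x))
      (∫ x in Icc a b, n₀ x * p x ^ (k+1) * Real.exp (t₀ * p x)) t₀ := by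
  have key := hasDerivAt_integral_of_dominated_loc_of_deriv_le (μ := volume.restrict (Icc a b))
    (F := fun t x => n₀ x * p x ^ k * Real.exp (t * p x))
    (F' := fun t x => n₀ x * p x ^ (k+1) * Real.exp (t * p x))
    (x₀ := t₀) (bound := fun x => |n₀ x| * (M ^ (k+1) * Real.exp ((|t₀|+1) * M)))
    (s := Metric.ball t₀ 1) (Metric.ball_mem_nhds t₀ one_pos)
    (Eventually.of_forall fun t =>
      (contOn_integrand hn₀c hp k t).aestronglyMeasurable measurableSet_Icc)
    ((contOn_integrand hn₀c hp k t₀).integrableOn_Icc)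
    ((contOn_integrand hn₀c hp (k+1) t₀).aestronglyMeasurable measurableSet_Icc)
    ?_ ?_ ?_
  · exact key.2
  · rw [ae_restrict_iff' measurableSet_Icc]
    refine ae_of_all _ fun x hx t ht => ?_
    have hMx := hM x hx
    have hM0 : 0 ≤ M := (abs_nonneg _).trans hMx
    have ht' : |t| ≤ |t₀| + 1 := by
      have h1 := mem_ball_iff_norm.mp ht
      have h2 := abs_sub_abs_le_abs_sub t t₀
      simp only [Real.norm_eq_abs] at h1; linarith
    have hexp : Real.exp (t * p x) ≤ Real.exp ((|t₀|+1) * M) := by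
      apply Real.exp_le_exp.2
      calc t * p x ≤ |t * p x| := le_abs_self _
        _ = |t| * |p x| := abs_mul _ _
        _ ≤ (|t₀|+1) * M := by apply mul_le_mul ht' hMx (abs_nonneg _); positivity
    have hpow : |p x| ^ (k+1) ≤ M ^ (k+1) := pow_le_pow_left₀ (abs_nonneg _) hMx _
    calc ‖n₀ x * p x ^ (k+1) * Real.exp (t * p x)‖
        = |n₀ x| * (|p x| ^ (k+1) * Real.exp (t * p x)) := by
          rw [Real.norm_eq_abs, abs_mul, abs_mul, abs_pow, abs_of_pos (Real.exp_pos _), mul_assoc]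
      _ ≤ |n₀ x| * (M ^ (k+1) * Real.exp ((|t₀|+1) * M)) := by
          apply mul_le_mul_of_nonneg_left _ (abs_nonneg _)
          exact mul_le_mul hpow hexp (Real.exp_pos _).le (by positivity)
  · exact ((hn₀c.abs.mul continuous_const).continuousOn).integrableOn_Icc
  · refine ae_of_all _ fun x t _ => ?_
    have h1 : HasDerivAt (fun t : ℝ => t * p x) (p x) t := hasDerivAt_mul_const _
    have h2 := (h1.exp).const_mul (n₀ x * p x ^ k)
    convert h2 using 1
    · rfl
    · ring

lemma iteratedDeriv_mom {a b : ℝ} {n₀ p : ℝ → ℝ} (hn₀c : Continuous n₀)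
    (hp : ContinuousOn p (Icc a b)) {M : ℝ} (hM : ∀ x ∈ Icc a b, |p x| ≤ M)
    (k : ℕ) :
    iteratedDeriv k (fun t => ∫ x in Icc a b, n₀ x * Real.exp (t * p x))
      = fun t => ∫ x in Icc a b, n₀ x * p x ^ k * Real.exp (t * p x) := by
  induction k with
  | zero => simp [iteratedDeriv_zero]
  | succ k ih =>
      funext t
      rw [iteratedDeriv_succ, ih]
      exact (hasDerivAt_mom hn₀c hp hM k t).deriv

lemma eventEq_iteratedDeriv {f g : ℝ → ℝ} {t : ℝ} (h : f =ᶠ[𝓝 t] g) (k : ℕ) :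
    iteratedDeriv k f =ᶠ[𝓝 t] iteratedDeriv k g := by
  induction k with
  | zero => simpa [iteratedDeriv_zero]
  | succ k ih => rw [iteratedDeriv_succ, iteratedDeriv_succ]; exact ih.deriv

/-- Derivative (within `Icc a b`, at `a`) of a function monotone on `Icc a b` is nonneg. -/
lemma deriv_nonneg_of_monotoneOn {a b : ℝ} (hab : a < b) {p : ℝ → ℝ} {c : ℝ}
    (hm : MonotoneOn p (Icc a b)) (hd : HasDerivWithinAt p c (Icc a b) a) : 0 ≤ c := by
  have hd' : HasDerivWithinAt p c (Ioc a b) a := hd.mono Ioc_subset_Icc_self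
  rw [hasDerivWithinAt_iff_tendsto_slope] at hd'
  have hIoc : Ioc a b \ {a} = Ioc a b := diff_singleton_eq_self (by simp)
  rw [hIoc] at hd'
  have hne : (𝓝[Ioc a b] a).NeBot := by
    rw [← mem_closure_iff_nhdsWithin_neBot, closure_Ioc hab.ne]
    exact left_mem_Icc.2 hab.le
  refine ge_of_tendsto hd' (eventually_nhdsWithin_of_forall fun y hy => ?_)
  rw [slope_def_field]
  have h1 : p a ≤ p y := hm (left_mem_Icc.2 hab.le) ⟨hy.1.le, hy.2⟩ hy.1.le
  have h2 : a < y := hy.1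
  apply div_nonneg <;> linarith

/-- Find an interior point where a strict inequality of continuous functions holds. -/
lemma exists_interior_lt {a b : ℝ} (hab : a < b) {p₁ p₂ : ℝ → ℝ}
    (h₁ : ContinuousOn p₁ (Icc a b)) (h₂ : ContinuousOn p₂ (Icc a b))
    {x₀ : ℝ} (hx₀ : x₀ ∈ Icc a b) (hlt : p₁ x₀ < p₂ x₀) :
    ∃ x₁ ∈ Ioo a b, p₁ x₁ < p₂ x₁ := by
  have hc : ContinuousWithinAt (fun x => p₂ x - p₁ x) (Icc a b) x₀ :=
    (h₂ x₀ hx₀).sub (h₁ x₀ hx₀)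
  have hev : ∀ᶠ x in 𝓝[Icc a b] x₀, 0 < p₂ x - p₁ x :=
    hc.eventually_const_lt (by simpa using sub_pos.2 hlt)
  rw [eventually_iff, Metric.mem_nhdsWithin_iff] at hev
  obtain ⟨ε, hε, hsub⟩ := hev
  set c := max a (x₀ - ε) with hc'
  set d := min b (x₀ + ε) with hd'
  have hca : a ≤ c := le_max_left _ _
  have hdb : d ≤ b := min_le_left _ _
  have hcx : x₀ - ε ≤ c := le_max_right _ _
  have hdx : d ≤ x₀ + ε := min_le_right _ _
  have hcd : c < d := max_lt (lt_min hab (by linarith [hx₀.1]))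
    (lt_min (by linarith [hx₀.2]) (by linarith))
  refine ⟨(c + d) / 2, ⟨by linarith [hca], by linarith [hdb]⟩, ?_⟩
  have hmem : (c + d) / 2 ∈ Metric.ball x₀ ε ∩ Icc a b := by
    constructor
    · rw [Metric.mem_ball, Real.dist_eq, abs_sub_lt_iff]
      constructor <;> linarith
    · exact ⟨by linarith, by linarith⟩
  have := hsub hmem
  simpa using this

/-- Core contradiction: both strictly monotone, equal integrals against all continuous `g`,
but `p₁ x₀ < p₂ x₀` at an interior point. -/
lemma mono_contra {a b : ℝ} (hab : a < b) {n₀ p₁ p₂ : ℝ → ℝ}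
    (hn₀c : Continuous n₀) (hn₀nn : ∀ x, 0 ≤ n₀ x) (hn₀pos : ∀ x ∈ Ioo a b, 0 < n₀ x)
    (h₁ : ContinuousOn p₁ (Icc a b)) (h₂ : ContinuousOn p₂ (Icc a b))
    (hm₁ : StrictMonoOn p₁ (Icc a b)) (hm₂ : StrictMonoOn p₂ (Icc a b))
    (hint : ∀ g : ℝ → ℝ, Continuous g →
      (∫ x in Icc a b, n₀ x * g (p₁ x)) = ∫ x in Icc a b, n₀ x * g (p₂ x))
    {x₀ : ℝ} (hx₀ : x₀ ∈ Ioo a b) (hlt : p₁ x₀ < p₂ x₀) : False := by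
  have hx₀' : x₀ ∈ Icc a b := Ioo_subset_Icc_self hx₀
  set u := p₁ x₀ with hu
  set v := p₂ x₀ with hv
  set c := (2*u + v)/3 with hcdef
  set c' := (u + 2*v)/3 with hc'def
  have huc : u < c := by rw [hcdef]; linarith
  have hcc' : c < c' := by rw [hcdef, hc'def]; linarith
  have hc'v : c' < v := by rw [hc'def]; linarith
  set g : ℝ → ℝ := fun y => max 0 (min 1 ((c' - y)/(c' - c))) with hgdef
  have hgc : Continuous g := by
    apply continuous_const.max
    exact continuous_const.min ((continuous_const.sub continuous_id).div_const _)
  have hg01 : ∀ y, 0 ≤ g y ∧ g y ≤ 1 := fun y =>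
    ⟨le_max_left _ _, max_le zero_le_one (min_le_left _ _)⟩
  have hgone : ∀ y ≤ c, g y = 1 := by
    intro y hy
    have h1 : (1:ℝ) ≤ (c' - y)/(c' - c) := by
      rw [le_div_iff₀ (by linarith)]; linarith
    rw [hgdef]; simp only
    rw [min_eq_left h1, max_eq_right zero_le_one]
  have hgzero : ∀ y, c' ≤ y → g y = 0 := by
    intro y hy
    have h1 : (c' - y)/(c' - c) ≤ 0 := div_nonpos_of_nonpos_of_nonneg (by linarith) (by linarith)
    rw [hgdef]; simp only
    rw [min_eq_right (h1.trans zero_le_one), max_eq_left h1]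
  -- pointwise inequality on Icc a b
  have hpt : ∀ x ∈ Icc a b, n₀ x * g (p₂ x) ≤ n₀ x * g (p₁ x) := by
    intro x hx
    apply mul_le_mul_of_nonneg_left _ (hn₀nn x)
    rcases lt_or_ge x x₀ with h | h
    · have : p₁ x < u := hm₁ hx hx₀' h
      rw [hgone (p₁ x) (by linarith)]
      exact (hg01 _).2
    · have : v ≤ p₂ x := hm₂.monotoneOn hx₀' hx h
      rw [hgzero (p₂ x) (by linarith)]
      exact (hg01 _).1
  -- integrability
  have hi₁ : IntegrableOn (fun x => n₀ x * g (p₁ x)) (Icc a b) :=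
    (hn₀c.continuousOn.mul (hgc.comp_continuousOn h₁)).integrableOn_Icc
  have hi₂ : IntegrableOn (fun x => n₀ x * g (p₂ x)) (Icc a b) :=
    (hn₀c.continuousOn.mul (hgc.comp_continuousOn h₂)).integrableOn_Icc
  have hzero : (∫ x in Icc a b, (n₀ x * g (p₁ x) - n₀ x * g (p₂ x))) = 0 := by
    rw [integral_sub hi₁ hi₂, hint g hgc, sub_self]
  -- find interval [x₀, x₁] where integrand equals n₀
  have hcw : ContinuousWithinAt p₁ (Icc a b) x₀ := h₁ x₀ hx₀'
  have hev : ∀ᶠ x in 𝓝[Icc a b] x₀, p₁ x < c := hcw.eventually_lt_const (by linarith)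
  rw [eventually_iff, Metric.mem_nhdsWithin_iff] at hev
  obtain ⟨ε, hε, hsub⟩ := hev
  set x₁ := min (x₀ + ε/2) ((x₀ + b)/2) with hx₁def
  have hx₀x₁ : x₀ < x₁ := lt_min (by linarith) (by linarith [hx₀.2])
  have hx₁b : x₁ < b := (min_le_right _ _).trans_lt (by linarith [hx₀.2])
  have hx₁ε : x₁ - x₀ < ε := by
    have := min_le_left (x₀ + ε/2) ((x₀ + b)/2); rw [hx₁def]; linarith
  have hIccsub : Icc x₀ x₁ ⊆ Icc a b := fun x hx =>
    ⟨le_trans hx₀'.1 hx.1, le_trans hx.2 hx₁b.le⟩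
  have hEq : ∀ x ∈ Icc x₀ x₁, n₀ x * g (p₁ x) - n₀ x * g (p₂ x) = n₀ x := by
    intro x hx
    have hx' : x ∈ Icc a b := hIccsub hx
    have hball : x ∈ Metric.ball x₀ ε := by
      rw [Metric.mem_ball, Real.dist_eq, abs_sub_lt_iff]
      constructor <;> [linarith [hx.2]; linarith [hx.1]]
    have hp₁x : p₁ x < c := hsub ⟨hball, hx'⟩
    have hp₂x : v ≤ p₂ x := hm₂.monotoneOn hx₀' hx' hx.1
    rw [hgone (p₁ x) hp₁x.le, hgzero (p₂ x) (by linarith)]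
    ring
  -- strict positivity of ∫_{Icc x₀ x₁} n₀
  have hpos : 0 < ∫ x in Icc x₀ x₁, n₀ x := by
    rw [setIntegral_pos_iff_support_of_nonneg_ae
      (ae_of_all _ fun x => hn₀nn x) (hn₀c.continuousOn.integrableOn_Icc)]
    have hss : Icc x₀ x₁ ⊆ Function.support n₀ := by
      intro x hx
      have : x ∈ Ioo a b := ⟨lt_of_lt_of_le hx₀.1 hx.1, lt_of_le_of_lt hx.2 hx₁b⟩
      exact (hn₀pos x this).ne'
    rw [inter_eq_self_of_subset_right hss, Real.volume_Icc]
    rw [ENNReal.ofReal_pos]; linarith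
  -- compare integrals
  have hmono := setIntegral_mono_set (μ := volume)
    (hi₁.sub hi₂)
    ((ae_restrict_iff' measurableSet_Icc).2 (ae_of_all _ fun x hx => by
      simpa using sub_nonneg.2 (hpt x hx)))
    (HasSubset.Subset.eventuallyLE hIccsub)
  simp only [Pi.sub_apply] at hmono
  rw [hzero] at hmono
  have hcongr : (∫ x in Icc x₀ x₁, (n₀ x * g (p₁ x) - n₀ x * g (p₂ x)))
      = ∫ x in Icc x₀ x₁, n₀ x :=
    setIntegral_congr_fun measurableSet_Icc hEq
  rw [hcongr] at hmono
  linarith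

/-- Both strictly monotone increasing case. -/
lemma eqOn_of_integrals {a b : ℝ} (hab : a < b) {n₀ p₁ p₂ : ℝ → ℝ}
    (hn₀c : Continuous n₀) (hn₀nn : ∀ x, 0 ≤ n₀ x) (hn₀pos : ∀ x ∈ Ioo a b, 0 < n₀ x)
    (h₁ : ContinuousOn p₁ (Icc a b)) (h₂ : ContinuousOn p₂ (Icc a b))
    (hm₁ : StrictMonoOn p₁ (Icc a b)) (hm₂ : StrictMonoOn p₂ (Icc a b))
    (hint : ∀ g : ℝ → ℝ, Continuous g →
      (∫ x in Icc a b, n₀ x * g (p₁ x)) = ∫ x in Icc a b, n₀ x * g (p₂ x)) :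
    EqOn p₁ p₂ (Icc a b) := by
  intro x hx
  by_contra hne
  rcases lt_or_gt_of_ne hne with h | h
  · obtain ⟨x₁, hx₁, hlt⟩ := exists_interior_lt hab h₁ h₂ hx h
    exact mono_contra hab hn₀c hn₀nn hn₀pos h₁ h₂ hm₁ hm₂ hint hx₁ hlt
  · obtain ⟨x₁, hx₁, hlt⟩ := exists_interior_lt hab h₂ h₁ hx h
    exact mono_contra hab hn₀c hn₀nn hn₀pos h₂ h₁ hm₂ hm₁
      (fun g hg => (hint g hg).symm) hx₁ hlt


/-- From equal moments (with weight) to equal integrals against polynomials. -/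
lemma poly_eq {a b t₀ : ℝ} {n₀ p₁ p₂ : ℝ → ℝ} (hn₀c : Continuous n₀)
    (h₁ : ContinuousOn p₁ (Icc a b)) (h₂ : ContinuousOn p₂ (Icc a b))
    (hmom : ∀ k : ℕ, (∫ x in Icc a b, n₀ x * p₁ x ^ k * Real.exp (t₀ * p₁ x))
      = ∫ x in Icc a b, n₀ x * p₂ x ^ k * Real.exp (t₀ * p₂ x))
    (q : Polynomial ℝ) :
    (∫ x in Icc a b, n₀ x * q.eval (p₁ x) * Real.exp (t₀ * p₁ x))
      = ∫ x in Icc a b, n₀ x * q.eval (p₂ x) * Real.exp (t₀ * p₂ x) := by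
  have hint : ∀ (p : ℝ → ℝ), ContinuousOn p (Icc a b) → ∀ r : Polynomial ℝ,
      IntegrableOn (fun x => n₀ x * r.eval (p x) * Real.exp (t₀ * p x)) (Icc a b) := by
    intro p hp r
    exact ((hn₀c.continuousOn.mul (r.continuous.comp_continuousOn hp)).mul
      (Real.continuous_exp.comp_continuousOn (continuousOn_const.mul hp))).integrableOn_Icc
  induction q using Polynomial.induction_on' with
  | monomial n r =>
      have key : ∀ (p : ℝ → ℝ) (x : ℝ),
          n₀ x * (Polynomial.monomial n r).eval (p x) * Real.exp (t₀ * p x)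
            = r * (n₀ x * p x ^ n * Real.exp (t₀ * p x)) := by
        intro p x; rw [Polynomial.eval_monomial]; ring
      simp_rw [key]
      rw [integral_const_mul, integral_const_mul, hmom n]
  | add q r hq hr =>
      have key : ∀ (p : ℝ → ℝ) (x : ℝ),
          n₀ x * (q + r).eval (p x) * Real.exp (t₀ * p x)
            = n₀ x * q.eval (p x) * Real.exp (t₀ * p x)
              + n₀ x * r.eval (p x) * Real.exp (t₀ * p x) := by
        intro p x; rw [Polynomial.eval_add]; ring
      simp_rw [key]
      rw [integral_add (hint _ h₁ q) (hint _ h₁ r), integral_add (hint _ h₂ q) (hint _ h₂ r),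
        hq, hr]

/-- From equal integrals against polynomials to equal integrals against continuous functions,
via Weierstrass. -/
lemma cont_eq {a b t₀ M : ℝ} (hab' : a < b) {n₀ p₁ p₂ : ℝ → ℝ} (hn₀c : Continuous n₀)
    (h₁ : ContinuousOn p₁ (Icc a b)) (h₂ : ContinuousOn p₂ (Icc a b))
    (hM₁ : ∀ x ∈ Icc a b, |p₁ x| ≤ M) (hM₂ : ∀ x ∈ Icc a b, |p₂ x| ≤ M)
    (hmom : ∀ k : ℕ, (∫ x in Icc a b, n₀ x * p₁ x ^ k * Real.exp (t₀ * p₁ x))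
      = ∫ x in Icc a b, n₀ x * p₂ x ^ k * Real.exp (t₀ * p₂ x))
    (f : ℝ → ℝ) (hf : Continuous f) :
    (∫ x in Icc a b, n₀ x * f (p₁ x) * Real.exp (t₀ * p₁ x))
      = ∫ x in Icc a b, n₀ x * f (p₂ x) * Real.exp (t₀ * p₂ x) := by
  obtain ⟨C₀, hC₀'⟩ := isCompact_Icc.exists_bound_of_continuousOn (hn₀c.continuousOn (s := Icc a b))
  set C : ℝ := max C₀ 0 with hCdef
  have hC : ∀ x ∈ Icc a b, |n₀ x| ≤ C := fun x hx => (hC₀' x hx).trans (le_max_left _ _)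
  have hC0 : 0 ≤ C := le_max_right _ _
  have hM0 : 0 ≤ M := by
    rcases (Set.nonempty_Icc.2 (le_of_lt hab')) with ⟨x, hx⟩
    exact (abs_nonneg _).trans (hM₁ x hx)
  set V : ℝ := (volume (Icc a b)).toReal with hVdef
  have hV0 : 0 ≤ V := ENNReal.toReal_nonneg
  set K : ℝ := C * Real.exp (|t₀| * M) * V with hKdef
  have hK0 : 0 ≤ K := by positivity
  set L : ℝ := ∫ x in Icc a b, n₀ x * f (p₁ x) * Real.exp (t₀ * p₁ x) with hLdef
  set R : ℝ := ∫ x in Icc a b, n₀ x * f (p₂ x) * Real.exp (t₀ * p₂ x) with hRdef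
  have hIf : ∀ (p : ℝ → ℝ), ContinuousOn p (Icc a b) → ∀ h : ℝ → ℝ, Continuous h →
      IntegrableOn (fun x => n₀ x * h (p x) * Real.exp (t₀ * p x)) (Icc a b) := fun p hp h hh =>
    ((hn₀c.continuousOn.mul (hh.comp_continuousOn hp)).mul
      (Real.continuous_exp.comp_continuousOn (continuousOn_const.mul hp))).integrableOn_Icc
  have key : ∀ ε > (0:ℝ), |L - R| ≤ ε * (2 * K) := by
    intro ε hε
    obtain ⟨q, hq⟩ := exists_polynomial_near_of_continuousOn (-M) M f hf.continuousOn ε hε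
    have hbnd : ∀ (p : ℝ → ℝ), (∀ x ∈ Icc a b, |p x| ≤ M) →
        ∀ x ∈ Icc a b, ‖n₀ x * (f (p x) - q.eval (p x)) * Real.exp (t₀ * p x)‖
          ≤ C * ε * Real.exp (|t₀| * M) := by
      intro p hMp x hx
      have h1 : |f (p x) - q.eval (p x)| ≤ ε := by
        have := hq (p x) (abs_le.1 (hMp x hx))
        rw [abs_sub_comm] at this; exact this.le
      have h2 : Real.exp (t₀ * p x) ≤ Real.exp (|t₀| * M) := by
        apply Real.exp_le_exp.2
        calc t₀ * p x ≤ |t₀ * p x| := le_abs_self _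
          _ = |t₀| * |p x| := abs_mul _ _
          _ ≤ |t₀| * M := mul_le_mul_of_nonneg_left (hMp x hx) (abs_nonneg _)
      calc ‖n₀ x * (f (p x) - q.eval (p x)) * Real.exp (t₀ * p x)‖
          = |n₀ x| * |f (p x) - q.eval (p x)| * Real.exp (t₀ * p x) := by
            rw [Real.norm_eq_abs, abs_mul, abs_mul, abs_of_pos (Real.exp_pos _)]
        _ ≤ C * ε * Real.exp (|t₀| * M) := by
            apply mul_le_mul (mul_le_mul (hC x hx) h1 (abs_nonneg _) hC0) h2
              (Real.exp_pos _).le (by positivity)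
    have hdiff : ∀ (p : ℝ → ℝ), ContinuousOn p (Icc a b) → (∀ x ∈ Icc a b, |p x| ≤ M) →
        |(∫ x in Icc a b, n₀ x * f (p x) * Real.exp (t₀ * p x))
          - ∫ x in Icc a b, n₀ x * q.eval (p x) * Real.exp (t₀ * p x)| ≤ ε * K := by
      intro p hp hMp
      have hsub : (∫ x in Icc a b, n₀ x * f (p x) * Real.exp (t₀ * p x))
          - (∫ x in Icc a b, n₀ x * q.eval (p x) * Real.exp (t₀ * p x))
          = ∫ x in Icc a b, n₀ x * (f (p x) - q.eval (p x)) * Real.exp (t₀ * p x) := by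
        rw [← integral_sub (hIf p hp f hf) (hIf p hp _ q.continuous)]
        congr 1; funext x; ring
      rw [hsub]
      have := norm_setIntegral_le_of_norm_le_const (μ := volume)
        (s := Icc a b) (C := C * ε * Real.exp (|t₀| * M)) measure_Icc_lt_top (hbnd p hMp)
      rw [Real.norm_eq_abs] at this
      calc |∫ x in Icc a b, n₀ x * (f (p x) - q.eval (p x)) * Real.exp (t₀ * p x)|
          ≤ C * ε * Real.exp (|t₀| * M) * V := this
        _ = ε * K := by rw [hKdef]; ring
    have hpq := poly_eq hn₀c h₁ h₂ hmom q
    have d1 := hdiff p₁ h₁ hM₁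
    have d2 := hdiff p₂ h₂ hM₂
    calc |L - R| ≤ |L - ∫ x in Icc a b, n₀ x * q.eval (p₁ x) * Real.exp (t₀ * p₁ x)|
          + |(∫ x in Icc a b, n₀ x * q.eval (p₁ x) * Real.exp (t₀ * p₁ x)) - R| :=
            abs_sub_le _ _ _
      _ = |L - ∫ x in Icc a b, n₀ x * q.eval (p₁ x) * Real.exp (t₀ * p₁ x)|
          + |(∫ x in Icc a b, n₀ x * q.eval (p₂ x) * Real.exp (t₀ * p₂ x)) - R| := by
            rw [hpq]
      _ ≤ ε * K + ε * K := add_le_add d1 (by rw [abs_sub_comm]; exact d2)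
      _ = ε * (2 * K) := by ring
  by_contra hne
  have hd : 0 < |L - R| := abs_pos.2 (sub_ne_zero.2 hne)
  have hk := key (|L - R| / (2 * (2 * K) + 2)) (by positivity)
  rw [div_mul_eq_mul_div, le_div_iff₀ (by positivity)] at hk
  nlinarith

end Stmt6Aux

/-- Uniqueness of the growth rate `p` from the total population size, for constant death rate
`d > 0` and strictly monotone `p₁, p₂` with `p₁' p₂' > 0` on `S = Icc a b = supp n₀`. -/
theorem stmt_6 (T a b : ℝ) (hT : 0 < T) (hab : a < b) (n₀ : ℝ → ℝ)
    (hn₀c : Continuous n₀) (hn₀nn : ∀ x, 0 ≤ n₀ x)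
    (hsupp : tsupport n₀ = Icc a b) (hn₀pos : ∀ x ∈ Ioo a b, 0 < n₀ x)
    (d : ℝ) (hd : 0 < d)
    (p₁ p₂ p₁' p₂' : ℝ → ℝ)
    (hp₁ : ∀ x ∈ Icc a b, HasDerivWithinAt p₁ (p₁' x) (Icc a b) x)
    (hp₂ : ∀ x ∈ Icc a b, HasDerivWithinAt p₂ (p₂' x) (Icc a b) x)
    (hp₁'c : ContinuousOn p₁' (Icc a b)) (hp₂'c : ContinuousOn p₂' (Icc a b))
    (hsign : ∀ x ∈ Icc a b, 0 < p₁' x * p₂' x)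
    (hmono₁ : StrictMonoOn p₁ (Icc a b) ∨ StrictAntiOn p₁ (Icc a b))
    (hmono₂ : StrictMonoOn p₂ (Icc a b) ∨ StrictAntiOn p₂ (Icc a b))
    (ρ₁ ρ₂ : ℝ → ℝ) (hρ₁c : Continuous ρ₁) (hρ₂c : Continuous ρ₂)
    (hfix₁ : ∀ t ∈ Icc (0:ℝ) T, ρ₁ t =
      ∫ x in Icc a b, n₀ x * Real.exp (t * p₁ x) * Real.exp (-(d * ∫ s in (0:ℝ)..t, ρ₁ s)))
    (hfix₂ : ∀ t ∈ Icc (0:ℝ) T, ρ₂ t =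
      ∫ x in Icc a b, n₀ x * Real.exp (t * p₂ x) * Real.exp (-(d * ∫ s in (0:ℝ)..t, ρ₂ s)))
    (heq : ∀ t ∈ Icc (0:ℝ) T, ρ₁ t = ρ₂ t) :
    Set.EqOn p₁ p₂ (Icc a b) := by
  have hc₁ : ContinuousOn p₁ (Icc a b) := fun x hx => (hp₁ x hx).continuousWithinAt
  have hc₂ : ContinuousOn p₂ (Icc a b) := fun x hx => (hp₂ x hx).continuousWithinAt
  obtain ⟨M₁, hM₁⟩ := isCompact_Icc.exists_bound_of_continuousOn hc₁
  obtain ⟨M₂, hM₂⟩ := isCompact_Icc.exists_bound_of_continuousOn hc₂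
  set M := max M₁ M₂ with hMdef
  have hM₁' : ∀ x ∈ Icc a b, |p₁ x| ≤ M := fun x hx => (hM₁ x hx).trans (le_max_left _ _)
  have hM₂' : ∀ x ∈ Icc a b, |p₂ x| ≤ M := fun x hx => (hM₂ x hx).trans (le_max_right _ _)
  -- Step 1: equality of Laplace-type integrals on [0,T]
  have hGeq : ∀ t ∈ Icc (0:ℝ) T, (∫ x in Icc a b, n₀ x * Real.exp (t * p₁ x))
      = ∫ x in Icc a b, n₀ x * Real.exp (t * p₂ x) := by
    intro t ht
    have hI : (∫ s in (0:ℝ)..t, ρ₁ s) = ∫ s in (0:ℝ)..t, ρ₂ s := by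
      apply intervalIntegral.integral_congr
      intro s hs
      rw [uIcc_of_le ht.1] at hs
      exact heq s ⟨hs.1, hs.2.trans ht.2⟩
    have h1 := hfix₁ t ht
    have h2 := hfix₂ t ht
    rw [heq t ht, h2, hI, integral_mul_const, integral_mul_const] at h1
    exact (mul_right_cancel₀ (Real.exp_ne_zero _) h1).symm
  -- Step 2: equality of weighted moments at t₀ = T/2
  set t₀ : ℝ := T/2 with ht₀def
  have ht₀ : t₀ ∈ Ioo 0 T := ⟨by linarith, by linarith⟩
  have hmom : ∀ k : ℕ, (∫ x in Icc a b, n₀ x * p₁ x ^ k * Real.exp (t₀ * p₁ x))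
      = ∫ x in Icc a b, n₀ x * p₂ x ^ k * Real.exp (t₀ * p₂ x) := by
    intro k
    have hev : (fun t => ∫ x in Icc a b, n₀ x * Real.exp (t * p₁ x))
        =ᶠ[nhds t₀] (fun t => ∫ x in Icc a b, n₀ x * Real.exp (t * p₂ x)) :=
      Filter.eventually_of_mem (isOpen_Ioo.mem_nhds ht₀)
        (fun t ht => hGeq t ⟨ht.1.le, ht.2.le⟩)
    have h := (Stmt6Aux.eventEq_iteratedDeriv hev k).self_of_nhds
    rwa [Stmt6Aux.iteratedDeriv_mom hn₀c hc₁ hM₁' k,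
      Stmt6Aux.iteratedDeriv_mom hn₀c hc₂ hM₂' k] at h
  -- Step 3: equality of integrals against all continuous functions
  have hint : ∀ g : ℝ → ℝ, Continuous g →
      (∫ x in Icc a b, n₀ x * g (p₁ x)) = ∫ x in Icc a b, n₀ x * g (p₂ x) := by
    intro g hg
    have hfc : Continuous (fun y : ℝ => g y * Real.exp (-(t₀ * y))) :=
      hg.mul (Real.continuous_exp.comp (continuous_const.mul continuous_id).neg)
    have h := Stmt6Aux.cont_eq hab hn₀c hc₁ hc₂ hM₁' hM₂' hmom _ hfc
    have e : ∀ (p : ℝ → ℝ), (fun x => n₀ x * (g (p x) * Real.exp (-(t₀ * p x)))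
        * Real.exp (t₀ * p x)) = fun x => n₀ x * g (p x) := by
      intro p; funext x
      rw [Real.exp_neg]
      field_simp
    simp only [e p₁, e p₂] at h
    exact h
  -- Step 4: both monotone in the same direction
  have ha : a ∈ Icc a b := left_mem_Icc.2 hab.le
  rcases hmono₁ with hm₁ | hm₁ <;> rcases hmono₂ with hm₂ | hm₂
  · exact Stmt6Aux.eqOn_of_integrals hab hn₀c hn₀nn hn₀pos hc₁ hc₂ hm₁ hm₂ hint
  · -- p₁ mono, p₂ anti: contradiction with sign
    exfalso
    have h1 : 0 ≤ p₁' a := Stmt6Aux.deriv_nonneg_of_monotoneOn hab hm₁.monotoneOn (hp₁ a ha)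
    have hm₂' : MonotoneOn (fun x => -p₂ x) (Icc a b) := fun x hx y hy hxy =>
      neg_le_neg (hm₂.antitoneOn hx hy hxy)
    have h2 : 0 ≤ -(p₂' a) :=
      Stmt6Aux.deriv_nonneg_of_monotoneOn hab hm₂' (hp₂ a ha).neg
    nlinarith [hsign a ha]
  · -- p₁ anti, p₂ mono: contradiction with sign
    exfalso
    have h2 : 0 ≤ p₂' a := Stmt6Aux.deriv_nonneg_of_monotoneOn hab hm₂.monotoneOn (hp₂ a ha)
    have hm₁' : MonotoneOn (fun x => -p₁ x) (Icc a b) := fun x hx y hy hxy =>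
      neg_le_neg (hm₁.antitoneOn hx hy hxy)
    have h1 : 0 ≤ -(p₁' a) :=
      Stmt6Aux.deriv_nonneg_of_monotoneOn hab hm₁' (hp₁ a ha).neg
    nlinarith [hsign a ha]
  · -- both anti: apply the mono case to -p₁, -p₂
    have hm₁' : StrictMonoOn (fun x => -p₁ x) (Icc a b) := fun x hx y hy hxy =>
      neg_lt_neg (hm₁ hx hy hxy)
    have hm₂' : StrictMonoOn (fun x => -p₂ x) (Icc a b) := fun x hx y hy hxy =>
      neg_lt_neg (hm₂ hx hy hxy)
    have hint' : ∀ g : ℝ → ℝ, Continuous g →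
        (∫ x in Icc a b, n₀ x * g (-p₁ x)) = ∫ x in Icc a b, n₀ x * g (-p₂ x) :=
      fun g hg => hint (fun y => g (-y)) (hg.comp continuous_neg)
    have := Stmt6Aux.eqOn_of_integrals hab hn₀c hn₀nn hn₀pos hc₁.neg hc₂.neg hm₁' hm₂' hint'
    intro x hx
    have h := this hx
    simpa using h
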